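/- Let G(λ) ∈ F(λ)^{p×m} and Ĝ(λ) ∈ F(λ)^{(p+s)×(m+s)} with s ≥ 0, and let U(λ), V(λ) be unimodular polynomial matrices with U(λ)Ĝ(λ)V(λ) = Diag(G(λ), I_s). (a) If H(λ) is a right polynomial basis of G(λ), then V(λ)·[H(λ); 0] is a right polynomial basis of Ĝ(λ). (b) If Ĥ(λ) is a right polynomial basis of Ĝ(λ), then V(λ)^{-1}Ĥ(λ) = [H(λ); 0] for some right polynomial basis H(λ) of G(λ). -/

import Mathlib

open Polynomial Matrix

noncomputable section

variable {F : Type*} [Field F]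

/-- The natural embedding of a polynomial matrix into the rational functions. -/
def toRF {a b : Type*} (M : Matrix a b (Polynomial F)) : Matrix a b (RatFunc F) :=
  M.map (algebraMap (Polynomial F) (RatFunc F))

/-- A square polynomial matrix is unimodular if its determinant is a unit. -/
def Unimodular {a : Type*} [Fintype a] [DecidableEq a] (U : Matrix a a (Polynomial F)) : Prop :=
  IsUnit U.det

/-- The columns of the polynomial matrix `N`, regarded as rational vectors, form a basis of
the right null-space of the rational matrix `M`. -/
def IsRightPolyBasis {a b : Type*} [Fintype a] [Fintype b] {l : ℕ}
    (M : Matrix a b (RatFunc F)) (N : Matrix b (Fin l) (Polynomial F)) : Prop :=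
  LinearIndependent (RatFunc F) (fun j : Fin l => (toRF N)ᵀ j) ∧
    Submodule.span (RatFunc F) (Set.range fun j : Fin l => (toRF N)ᵀ j) =
      LinearMap.ker M.mulVecLin

lemma toRF_mul {a b c : Type*} [Fintype b] (A : Matrix a b (Polynomial F))
    (B : Matrix b c (Polynomial F)) : toRF (A * B) = toRF A * toRF B :=
  Matrix.map_mul

lemma toRF_one {a : Type*} [Fintype a] [DecidableEq a] :
    toRF (1 : Matrix a a (Polynomial F)) = 1 :=
  Matrix.map_one _ (map_zero _) (map_one _)

lemma toRF_det_isUnit {a : Type*} [Fintype a] [DecidableEq a]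
    {M : Matrix a a (Polynomial F)} (h : IsUnit M.det) : IsUnit (toRF M).det := by
  have hd : (toRF M).det = algebraMap (Polynomial F) (RatFunc F) M.det := by
    rw [RingHom.map_det]; rfl
  rw [hd]
  exact h.map _

/-- The linear map extending a vector by zeros. -/
def elimZero (R : Type*) [CommRing R] (m s : Type*) : (m → R) →ₗ[R] (m ⊕ s → R) where
  toFun y := Sum.elim y 0
  map_add' x y := by funext i; cases i <;> simp
  map_smul' c x := by funext i; cases i <;> simp

/-- Let `U Ĝ V = Diag(G, I_s)` with `U`, `V` unimodular. (a) If `H` is a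
right polynomial basis of `G`, then `V·[H;0]` is a right polynomial basis of `Ĝ`. (b) If `Ĥ`
is a right polynomial basis of `Ĝ`, then `V⁻¹ Ĥ = [H;0]` for some right polynomial basis `H`
of `G`. -/
theorem rightPolyBasis_unimodular_extension
    {p m s : ℕ}
    (G : Matrix (Fin p) (Fin m) (RatFunc F))
    (Ghat : Matrix (Fin p ⊕ Fin s) (Fin m ⊕ Fin s) (RatFunc F))
    (U : Matrix (Fin p ⊕ Fin s) (Fin p ⊕ Fin s) (Polynomial F))
    (V : Matrix (Fin m ⊕ Fin s) (Fin m ⊕ Fin s) (Polynomial F))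
    (hU : Unimodular U) (hV : Unimodular V)
    (hUV : toRF U * Ghat * toRF V =
      Matrix.fromBlocks G 0 0 (1 : Matrix (Fin s) (Fin s) (RatFunc F))) :
    (∀ (l : ℕ) (H : Matrix (Fin m) (Fin l) (Polynomial F)), IsRightPolyBasis G H →
      IsRightPolyBasis Ghat
        (V * Matrix.fromRows H (0 : Matrix (Fin s) (Fin l) (Polynomial F)))) ∧
    (∀ (l : ℕ) (Hhat : Matrix (Fin m ⊕ Fin s) (Fin l) (Polynomial F)),
      IsRightPolyBasis Ghat Hhat →
        ∃ H : Matrix (Fin m) (Fin l) (Polynomial F),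
          (toRF V)⁻¹ * toRF Hhat =
            toRF (Matrix.fromRows H (0 : Matrix (Fin s) (Fin l) (Polynomial F))) ∧
          IsRightPolyBasis G H) := by
  classical
  have hVr : IsUnit (toRF V).det := toRF_det_isUnit hV
  have hUr : IsUnit (toRF U).det := toRF_det_isUnit hU
  set Vr := toRF V with hVrdef
  set Ur := toRF U with hUrdef
  set D := Matrix.fromBlocks G 0 0 (1 : Matrix (Fin s) (Fin s) (RatFunc F)) with hD
  -- kernel characterization of the block-diagonal matrix
  have hkerD : ∀ y : (Fin m ⊕ Fin s) → RatFunc F,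
      D *ᵥ y = 0 ↔ G *ᵥ (y ∘ Sum.inl) = 0 ∧ y ∘ Sum.inr = 0 := by
    intro y
    rw [hD, fromBlocks_mulVec]
    simp only [Matrix.zero_mulVec, Matrix.one_mulVec, add_zero, zero_add]
    constructor
    · intro h
      exact ⟨funext fun i => congrFun h (Sum.inl i), funext fun i => congrFun h (Sum.inr i)⟩
    · rintro ⟨h1, h2⟩
      funext i
      cases i with
      | inl i => exact congrFun h1 i
      | inr i => exact congrFun h2 i
  have hmain : ∀ x, D *ᵥ (Vr⁻¹ *ᵥ x) = Ur *ᵥ (Ghat *ᵥ x) := by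
    intro x
    rw [mulVec_mulVec, mulVec_mulVec, ← hUV, Matrix.mul_assoc (Ur * Ghat) Vr Vr⁻¹,
      Matrix.mul_nonsing_inv _ hVr, Matrix.mul_one]
  have hkerGhat : ∀ x, Ghat *ᵥ x = 0 ↔ D *ᵥ (Vr⁻¹ *ᵥ x) = 0 := by
    intro x
    rw [hmain]
    constructor
    · intro h; rw [h, Matrix.mulVec_zero]
    · intro h
      have h2 := congrArg (fun v => Ur⁻¹ *ᵥ v) h
      simpa [mulVec_mulVec, ← Matrix.mul_assoc, Matrix.nonsing_inv_mul _ hUr, Matrix.one_mul,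
        Matrix.one_mulVec] using h2
  -- the injective map transporting kernels
  set ι := elimZero (RatFunc F) (Fin m) (Fin s) with hι
  set f : (Fin m → RatFunc F) →ₗ[RatFunc F] (Fin m ⊕ Fin s → RatFunc F) :=
    Vr.mulVecLin ∘ₗ ι with hfdef
  have hfapply : ∀ z, f z = Vr *ᵥ Sum.elim z 0 := fun z => rfl
  have hfinj : Function.Injective f := by
    intro z z' h
    rw [hfapply, hfapply] at h
    have h2 := congrArg (fun v => Vr⁻¹ *ᵥ v) h
    simp only [mulVec_mulVec, Matrix.nonsing_inv_mul _ hVr, Matrix.one_mulVec] at h2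
    funext i
    exact congrFun h2 (Sum.inl i)
  have hker : LinearMap.ker Ghat.mulVecLin = Submodule.map f (LinearMap.ker G.mulVecLin) := by
    ext x
    simp only [LinearMap.mem_ker, Submodule.mem_map, mulVecLin_apply]
    constructor
    · intro hx
      have h1 := (hkerGhat x).mp hx
      obtain ⟨hG, hz⟩ := (hkerD _).mp h1
      refine ⟨(Vr⁻¹ *ᵥ x) ∘ Sum.inl, hG, ?_⟩
      have h3 : Sum.elim ((Vr⁻¹ *ᵥ x) ∘ Sum.inl) 0 = Vr⁻¹ *ᵥ x := by
        funext i
        cases i with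
        | inl i => rfl
        | inr i => exact (congrFun hz i).symm
      rw [hfapply, h3, mulVec_mulVec, Matrix.mul_nonsing_inv _ hVr, Matrix.one_mulVec]
    · rintro ⟨z, hz, rfl⟩
      rw [hkerGhat]
      have h4 : Vr⁻¹ *ᵥ f z = Sum.elim z 0 := by
        rw [hfapply, mulVec_mulVec, Matrix.nonsing_inv_mul _ hVr, Matrix.one_mulVec]
      rw [h4, hkerD]
      exact ⟨hz, rfl⟩
  -- columns of a product
  have hcolmul : ∀ {l : ℕ} (A : Matrix (Fin m ⊕ Fin s) (Fin m ⊕ Fin s) (Polynomial F))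
      (B : Matrix (Fin m ⊕ Fin s) (Fin l) (Polynomial F)) (j : Fin l),
      (toRF (A * B))ᵀ j = toRF A *ᵥ ((toRF B)ᵀ j) := by
    intro l A B j
    funext i
    simp [toRF_mul, Matrix.mul_apply, Matrix.mulVec, dotProduct]
  have hcolRows : ∀ {l : ℕ} (H : Matrix (Fin m) (Fin l) (Polynomial F)) (j : Fin l),
      (toRF (Matrix.fromRows H (0 : Matrix (Fin s) (Fin l) (Polynomial F))))ᵀ j =
        Sum.elim ((toRF H)ᵀ j) 0 := by
    intro l H j
    funext i
    cases i with
    | inl i => rfl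
    | inr i => simp [toRF, Matrix.fromRows_apply_inr]
  have hcols : ∀ {l : ℕ} (H : Matrix (Fin m) (Fin l) (Polynomial F)),
      (fun j : Fin l => (toRF (V * Matrix.fromRows H
          (0 : Matrix (Fin s) (Fin l) (Polynomial F))))ᵀ j) =
        ⇑f ∘ (fun j => (toRF H)ᵀ j) := by
    intro l H
    funext j
    rw [hcolmul, hcolRows]
    exact (hfapply _).symm
  constructor
  · -- part (a)
    intro l H hH
    refine ⟨?_, ?_⟩
    · rw [hcols]
      exact hH.1.map' f (LinearMap.ker_eq_bot.mpr hfinj)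
    · rw [hcols, Set.range_comp, Submodule.span_image, hH.2]
      exact hker.symm
  · -- part (b)
    intro l Hhat hH
    have hVinv : Vr⁻¹ = toRF V⁻¹ := by
      apply Matrix.inv_eq_right_inv
      rw [hVrdef, ← toRF_mul, Matrix.mul_nonsing_inv _ hV, toRF_one]
    set K := V⁻¹ * Hhat with hKdef
    have hcolK : ∀ j, ∃ z, G *ᵥ z = 0 ∧ (toRF K)ᵀ j = Sum.elim z 0 := by
      intro j
      have hmem : (toRF Hhat)ᵀ j ∈ LinearMap.ker Ghat.mulVecLin := by
        rw [← hH.2]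
        exact Submodule.subset_span ⟨j, rfl⟩
      rw [hker] at hmem
      obtain ⟨z, hz, hfz⟩ := hmem
      refine ⟨z, by simpa using (LinearMap.mem_ker.mp hz), ?_⟩
      have h1 : (toRF K)ᵀ j = toRF V⁻¹ *ᵥ ((toRF Hhat)ᵀ j) := hcolmul V⁻¹ Hhat j
      rw [h1, ← hfz, hfapply, mulVec_mulVec, ← hVinv, Matrix.nonsing_inv_mul _ hVr,
        Matrix.one_mulVec]
    have hbot : ∀ i j, K (Sum.inr i) j = 0 := by
      intro i j
      obtain ⟨z, _, hcol⟩ := hcolK j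
      have h0 : algebraMap (Polynomial F) (RatFunc F) (K (Sum.inr i) j) = 0 := by
        have := congrFun hcol (Sum.inr i)
        simpa [toRF] using this
      exact IsFractionRing.injective (Polynomial F) (RatFunc F) (h0.trans (map_zero _).symm)
    set H : Matrix (Fin m) (Fin l) (Polynomial F) :=
      Matrix.of (fun i j => K (Sum.inl i) j) with hHdef
    have hKrows : K = Matrix.fromRows H (0 : Matrix (Fin s) (Fin l) (Polynomial F)) := by
      refine Matrix.ext fun i j => ?_
      cases i with
      | inl i => rfl
      | inr i => simpa [Matrix.fromRows_apply_inr] using hbot i j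
    have hVK : V * K = Hhat := by
      rw [hKdef, ← Matrix.mul_assoc, Matrix.mul_nonsing_inv _ hV, Matrix.one_mul]
    have hcolsb : (fun j : Fin l => (toRF Hhat)ᵀ j) = ⇑f ∘ (fun j => (toRF H)ᵀ j) := by
      funext j
      rw [← hVK, hcolmul, hKrows, hcolRows]
      exact (hfapply _).symm
    refine ⟨H, ?_, ?_, ?_⟩
    · rw [hVinv, ← toRF_mul]
      exact congrArg toRF hKrows
    · have h1 := hH.1
      rw [hcolsb] at h1
      exact LinearIndependent.of_comp f h1
    · have hspan := hH.2
      rw [hcolsb, Set.range_comp, Submodule.span_image, hker] at hspan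
      exact Submodule.map_injective_of_injective hfinj hspan

end
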